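/- Let a > 0, b > 0, C ≥ 0 and suppose |f(t, v + x*) − b·x*| ≤ C·|v| for all t and v. If C < b ≤ a²/4, then the equilibrium x* of the controlled equation ẍ(t) + a·ẋ(t) + b·x(t) = f(t, x(g(t))) is globally asymptotically stable: every twice differentiable solution x satisfies x(t) → x* as t → ∞. -/

import Mathlib

open Filter MeasureTheory

lemma decay_core (lam c S t : ℝ) (hlam : 0 < lam) (hSt : S ≤ t)
    (v v' : ℝ → ℝ) (hv : ∀ s, HasDerivAt v (v' s) s)
    (hineq : ∀ s ∈ Set.Icc S t, v' s + lam * v s ≤ c) :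
    v t ≤ c / lam + Real.exp (-lam * (t - S)) * (v S - c / lam) := by
  have hlam' : lam ≠ 0 := ne_of_gt hlam
  set w : ℝ → ℝ := fun s => Real.exp (lam * s) * (v s - c / lam) with hwdef
  have hw : ∀ s, HasDerivAt w (Real.exp (lam * s) * (v' s + lam * v s - c)) s := by
    intro s
    have h1 : HasDerivAt (fun r : ℝ => Real.exp (lam * r)) (Real.exp (lam * s) * lam) s := by
      have := (Real.hasDerivAt_exp (lam * s)).comp s ((hasDerivAt_id s).const_mul lam)
      simpa [mul_comm, Function.comp_def] using this
    have h2 := (hv s).sub_const (c / lam)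
    have h3 := h1.mul h2
    refine HasDerivAt.congr_deriv h3 ?_
    have hc : lam * (c / lam) = c := by field_simp
    linear_combination (-Real.exp (lam * s)) * hc
  have hdiff : Differentiable ℝ w := fun s => (hw s).differentiableAt
  have mono : AntitoneOn w (Set.Icc S t) := by
    apply antitoneOn_of_deriv_nonpos (convex_Icc S t) hdiff.continuous.continuousOn
      (fun s _ => (hdiff s).differentiableWithinAt)
    intro s hs
    rw [(hw s).deriv]
    have hs' : s ∈ Set.Icc S t := interior_subset hs
    have h4 := hineq s hs'
    have he := (Real.exp_pos (lam * s)).le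
    nlinarith
  have hW : w t ≤ w S := mono (Set.left_mem_Icc.2 hSt) (Set.right_mem_Icc.2 hSt) hSt
  have hexp : (0:ℝ) < Real.exp (lam * t) := Real.exp_pos _
  have h2 : v t - c / lam ≤ Real.exp (-lam * (t - S)) * (v S - c / lam) := by
    have heq : Real.exp (-lam * (t - S)) = Real.exp (lam * S) / Real.exp (lam * t) := by
      rw [← Real.exp_sub]; ring_nf
    rw [heq, div_mul_eq_mul_div, le_div_iff₀ hexp]
    calc (v t - c / lam) * Real.exp (lam * t) = w t := by rw [hwdef]; ring
      _ ≤ w S := hW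
      _ = Real.exp (lam * S) * (v S - c / lam) := rfl
  linarith

lemma decay_max (lam c S t : ℝ) (hlam : 0 < lam) (hSt : S ≤ t)
    (v v' : ℝ → ℝ) (hv : ∀ s, HasDerivAt v (v' s) s)
    (hineq : ∀ s ∈ Set.Icc S t, v' s + lam * v s ≤ c) :
    v t ≤ max (v S) (c / lam) := by
  have h := decay_core lam c S t hlam hSt v v' hv hineq
  have he1 : Real.exp (-lam * (t - S)) ≤ 1 := by
    rw [Real.exp_le_one_iff]
    nlinarith
  have he0 : (0:ℝ) < Real.exp (-lam * (t - S)) := Real.exp_pos _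
  rcases le_total (v S) (c / lam) with hc | hc
  · have : Real.exp (-lam * (t - S)) * (v S - c / lam) ≤ 0 :=
      mul_nonpos_of_nonneg_of_nonpos he0.le (by linarith)
    exact le_max_of_le_right (by linarith)
  · have : Real.exp (-lam * (t - S)) * (v S - c / lam) ≤ v S - c / lam := by
      nlinarith
    exact le_max_of_le_left (by linarith)

lemma decay_ev (lam c S δ : ℝ) (hlam : 0 < lam) (hδ : 0 < δ)
    (v v' : ℝ → ℝ) (hv : ∀ s, HasDerivAt v (v' s) s)
    (hineq : ∀ s ≥ S, v' s + lam * v s ≤ c) :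
    ∀ᶠ t in atTop, v t ≤ c / lam + δ := by
  have key : ∀ t ≥ S, v t ≤ c / lam + Real.exp (-lam * (t - S)) * (v S - c / lam) :=
    fun t ht => decay_core lam c S t hlam ht v v' hv (fun s hs => hineq s hs.1)
  have h1 : Tendsto (fun t : ℝ => -lam * (t - S)) atTop atBot := by
    apply Tendsto.const_mul_atTop_of_neg (by linarith : -lam < 0)
    exact tendsto_atTop_add_const_right _ _ tendsto_id
  have htend : Tendsto (fun t => Real.exp (-lam * (t - S)) * (v S - c / lam)) atTop (nhds 0) := by
    simpa using (Real.tendsto_exp_atBot.comp h1).mul_const (v S - c / lam)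
  filter_upwards [htend.eventually (gt_mem_nhds hδ), eventually_ge_atTop S] with t h1 h2
  linarith [key t h2]

/-- Theorem 3, part a): if C < b ≤ a²/4, the equilibrium x* of
ẍ(t) + a·ẋ(t) + b·x(t) = f(t, x(g(t))) is globally asymptotically stable. -/
theorem proportional_delayed_control_stability_case_a
    (t₀ a b C xs τ : ℝ)
    (f : ℝ → ℝ → ℝ) (g : ℝ → ℝ)
    (hgmeas : Measurable g) (hgle : ∀ t, g t ≤ t) (hgtend : Tendsto g atTop atTop)
    (hτ : 0 < τ) (hdelay : ∀ t, t - g t ≤ τ)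
    (ha : 0 < a) (hb : 0 < b) (hC : 0 ≤ C)
    (hfbound : ∀ t v, |f t (v + xs) - b * xs| ≤ C * |v|)
    (hcond : C < b ∧ b ≤ a ^ 2 / 4)
    (x x' x'' : ℝ → ℝ)
    (hx' : ∀ t, HasDerivAt x (x' t) t) (hx'' : ∀ t, HasDerivAt x' (x'' t) t)
    (hinit : ∃ M : ℝ, ∀ t ≤ t₀, |x t| ≤ M ∧ |x' t| ≤ M)
    (heq : ∀ t ≥ t₀, x'' t + a * x' t + b * x t = f t (x (g t))) :
    Tendsto x atTop (nhds xs) := by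
  obtain ⟨hCb, hba⟩ := hcond
  -- set up the characteristic roots
  set d : ℝ := Real.sqrt (a ^ 2 - 4 * b) with hddef
  have hd0 : 0 ≤ d := Real.sqrt_nonneg _
  have hd2 : d ^ 2 = a ^ 2 - 4 * b := Real.sq_sqrt (by linarith)
  have hdlt : d < a := by
    have h1 : d < Real.sqrt (a ^ 2) := Real.sqrt_lt_sqrt (by linarith) (by linarith)
    rwa [Real.sqrt_sq ha.le] at h1
  set l₁ : ℝ := (a - d) / 2 with hl₁def
  set l₂ : ℝ := (a + d) / 2 with hl₂def
  have hl₁ : 0 < l₁ := by simp only [hl₁def]; linarith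
  have hl₂ : 0 < l₂ := by simp only [hl₂def]; linarith
  have hmul : l₁ * l₂ = b := by simp only [hl₁def, hl₂def]; nlinarith
  have hadd : l₁ + l₂ = a := by simp only [hl₁def, hl₂def]; ring
  -- the forcing bound
  have hF : ∀ t ≥ t₀, |x'' t + a * x' t + b * x t - b * xs| ≤ C * |x (g t) - xs| := by
    intro t ht
    have h1 := hfbound t (x (g t) - xs)
    rw [sub_add_cancel] at h1
    rw [show x'' t + a * x' t + b * x t - b * xs = f t (x (g t)) - b * xs by
      linarith [heq t ht]]
    exact h1
  -- auxiliary functions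
  set u : ℝ → ℝ := fun t => x' t + l₂ * (x t - xs) with hudef
  set u' : ℝ → ℝ := fun t => x'' t + l₂ * x' t with hu'def
  have hu : ∀ s, HasDerivAt u (u' s) s := fun s =>
    (hx'' s).add (((hx' s).sub_const xs).const_mul l₂)
  have hukey : ∀ s ≥ t₀, |u' s + l₁ * u s| ≤ C * |x (g s) - xs| := by
    intro s hs
    have h1 : u' s + l₁ * u s = x'' s + a * x' s + b * x s - b * xs := by
      simp only [hudef, hu'def]
      linear_combination (x' s) * hadd + (x s - xs) * hmul
    rw [h1]
    exact hF s hs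
  have hun : ∀ s, HasDerivAt (fun r => -(u r)) (-(u' s)) s := fun s => (hu s).neg
  have hy : ∀ s, HasDerivAt (fun r => x r - xs) (x' s) s := fun s => (hx' s).sub_const xs
  have hyn : ∀ s, HasDerivAt (fun r => -(x r - xs)) (-(x' s)) s := fun s => (hy s).neg
  have hdx : Differentiable ℝ x := fun s => (hx' s).differentiableAt
  have hcx : Continuous x := hdx.continuous
  obtain ⟨M, hM⟩ := hinit
  set M₀ : ℝ := M + |xs| with hM₀def
  have hM0 : 0 ≤ M := le_trans (abs_nonneg _) (hM t₀ le_rfl).1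
  have hM₀0 : 0 ≤ M₀ := by simp only [hM₀def]; linarith [abs_nonneg xs]
  have hyinit : ∀ s ≤ t₀, |x s - xs| ≤ M₀ := by
    intro s hs
    have h1 := (hM s hs).1
    have h2 : |x s - xs| ≤ |x s| + |xs| := by
      simpa [sub_eq_add_neg] using abs_add_le (x s) (-xs)
    simp only [hM₀def]; linarith
  set K : ℝ := max M₀ (max (|x t₀ - xs|) (|u t₀| / l₂)) with hKdef
  have hK0 : 0 ≤ K := le_trans hM₀0 (le_max_left _ _)
  have hρ : C / b < 1 := (div_lt_one hb).2 hCb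
  have hρ0 : 0 ≤ C / b := div_nonneg hC hb.le
  have stage1 : ∀ t ≥ t₀, |x t - xs| ≤ K := by
    intro t ht
    set St : Set ℝ := (fun s => |x s - xs|) '' Set.Icc t₀ t with hStdef
    have hcont : ContinuousOn (fun s => |x s - xs|) (Set.Icc t₀ t) :=
      ((hcx.sub continuous_const).abs).continuousOn
    have hbdd : BddAbove St := (isCompact_Icc.image_of_continuousOn hcont).bddAbove
    have hne : St.Nonempty := ⟨_, ⟨t₀, Set.left_mem_Icc.2 ht, rfl⟩⟩
    set Qt : ℝ := max M₀ (sSup St) with hQdef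
    have hQ0 : 0 ≤ Qt := le_trans hM₀0 (le_max_left _ _)
    have hQ1 : ∀ s, s ≤ t → |x s - xs| ≤ Qt := by
      intro s hst
      rcases le_total s t₀ with h | h
      · exact le_trans (hyinit s h) (le_max_left _ _)
      · exact le_trans (le_csSup hbdd ⟨s, ⟨h, hst⟩, rfl⟩) (le_max_right _ _)
    set cu : ℝ := C * Qt with hcudef
    have hubd : ∀ s ∈ Set.Icc t₀ t, |u s| ≤ max (|u t₀|) (cu / l₁) := by
      intro s hs
      have hineq : ∀ r ∈ Set.Icc t₀ s, u' r + l₁ * u r ≤ cu := by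
        intro r hr
        have h1 := (abs_le.1 (hukey r hr.1)).2
        have h2 : |x (g r) - xs| ≤ Qt := hQ1 (g r) (le_trans (hgle r) (le_trans hr.2 hs.2))
        have h3 : C * |x (g r) - xs| ≤ cu := mul_le_mul_of_nonneg_left h2 hC
        linarith
      have hineqn : ∀ r ∈ Set.Icc t₀ s, -(u' r) + l₁ * (-(u r)) ≤ cu := by
        intro r hr
        have h1 := (abs_le.1 (hukey r hr.1)).1
        have h2 : |x (g r) - xs| ≤ Qt := hQ1 (g r) (le_trans (hgle r) (le_trans hr.2 hs.2))
        have h3 : C * |x (g r) - xs| ≤ cu := mul_le_mul_of_nonneg_left h2 hC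
        linarith
      have hA := decay_max l₁ cu t₀ s hl₁ hs.1 u u' hu hineq
      have hB := decay_max l₁ cu t₀ s hl₁ hs.1 (fun r => -(u r)) (fun r => -(u' r)) hun hineqn
      rw [abs_le]
      constructor
      · have : max (-(u t₀)) (cu / l₁) ≤ max (|u t₀|) (cu / l₁) :=
          max_le_max (neg_le_abs _) le_rfl
        linarith
      · exact le_trans hA (max_le_max (le_abs_self _) le_rfl)
    set U : ℝ := max (|u t₀|) (cu / l₁) with hUdef
    have hybd : ∀ s ∈ Set.Icc t₀ t, |x s - xs| ≤ max (|x t₀ - xs|) (U / l₂) := by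
      intro s hs
      have hineq : ∀ r ∈ Set.Icc t₀ s, x' r + l₂ * (x r - xs) ≤ U := fun r hr =>
        le_trans (le_abs_self _) (hubd r ⟨hr.1, le_trans hr.2 hs.2⟩)
      have hineqn : ∀ r ∈ Set.Icc t₀ s, -(x' r) + l₂ * (-(x r - xs)) ≤ U := by
        intro r hr
        have h1 : -(u r) ≤ U := by
          have := (abs_le.1 (hubd r ⟨hr.1, le_trans hr.2 hs.2⟩)).1
          linarith
        simp only [hudef] at h1 ⊢
        linarith
      have hA := decay_max l₂ U t₀ s hl₂ hs.1 (fun r => x r - xs) x' hy hineq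
      have hB := decay_max l₂ U t₀ s hl₂ hs.1 (fun r => -(x r - xs)) (fun r => -(x' r)) hyn hineqn
      rw [abs_le]
      constructor
      · have : max (-(x t₀ - xs)) (U / l₂) ≤ max (|x t₀ - xs|) (U / l₂) :=
          max_le_max (neg_le_abs _) le_rfl
        linarith
      · exact le_trans hA (max_le_max (le_abs_self _) le_rfl)
    have hcud : cu / l₁ / l₂ = (C / b) * Qt := by
      rw [div_div, hmul, hcudef]
      ring
    have hU2 : U / l₂ ≤ max (|u t₀| / l₂) ((C / b) * Qt) := by
      rcases le_total (|u t₀|) (cu / l₁) with h | h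
      · rw [hUdef, max_eq_right h, ← hcud]
        exact le_max_right _ _
      · rw [hUdef, max_eq_left h]
        exact le_max_left _ _
    have hQbound : Qt ≤ max K ((C / b) * Qt) := by
      have h1 : M₀ ≤ K := le_max_left _ _
      have h2 : |x t₀ - xs| ≤ K := le_trans (le_max_left _ _) (le_max_right _ _)
      have h3 : |u t₀| / l₂ ≤ K := le_trans (le_max_right _ _) (le_max_right _ _)
      have hsup : sSup St ≤ max (|x t₀ - xs|) (U / l₂) :=
        csSup_le hne (by rintro z ⟨s, hs, rfl⟩; exact hybd s hs)
      have h4 : max (|x t₀ - xs|) (U / l₂) ≤ max K ((C / b) * Qt) := by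
        apply max_le
        · exact le_trans h2 (le_max_left _ _)
        · refine le_trans hU2 (max_le ?_ (le_max_right _ _))
          exact le_trans h3 (le_max_left _ _)
      exact max_le (le_trans h1 (le_max_left _ _)) (le_trans hsup h4)
    have hfin : Qt ≤ K := by
      rcases le_max_iff.1 hQbound with h | h
      · exact h
      · nlinarith
    exact le_trans (hQ1 t le_rfl) hfin
  -- Stage 2: contraction step
  have step : ∀ B, 0 ≤ B → (∀ᶠ t in atTop, |x t - xs| ≤ B) →
      ∀ ε > (0:ℝ), ∀ᶠ t in atTop, |x t - xs| ≤ (C / b) * B + ε := by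
    intro B hB hev ε hε
    obtain ⟨S, hS⟩ := eventually_atTop.1 hev
    obtain ⟨S₁, hS₁⟩ := eventually_atTop.1
      ((hgtend.eventually_ge_atTop S).and (eventually_ge_atTop t₀))
    set σ : ℝ := l₂ * ε / 2 with hσdef
    have hσ : 0 < σ := by positivity
    have hueq : ∀ s ≥ S₁, u' s + l₁ * u s ≤ C * B := by
      intro s hs
      obtain ⟨hgs, hst₀⟩ := hS₁ s hs
      have h1 := (abs_le.1 (hukey s hst₀)).2
      have h2 : |x (g s) - xs| ≤ B := hS (g s) hgs
      have h3 : C * |x (g s) - xs| ≤ C * B := mul_le_mul_of_nonneg_left h2 hC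
      linarith
    have huneq : ∀ s ≥ S₁, -(u' s) + l₁ * (-(u s)) ≤ C * B := by
      intro s hs
      obtain ⟨hgs, hst₀⟩ := hS₁ s hs
      have h1 := (abs_le.1 (hukey s hst₀)).1
      have h2 : |x (g s) - xs| ≤ B := hS (g s) hgs
      have h3 : C * |x (g s) - xs| ≤ C * B := mul_le_mul_of_nonneg_left h2 hC
      linarith
    have hevu : ∀ᶠ s in atTop, |u s| ≤ C * B / l₁ + σ := by
      filter_upwards [decay_ev l₁ (C*B) S₁ σ hl₁ hσ u u' hu hueq,
        decay_ev l₁ (C*B) S₁ σ hl₁ hσ (fun r => -(u r)) (fun r => -(u' r)) hun huneq]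
        with s h1 h2
      rw [abs_le]
      constructor <;> linarith
    obtain ⟨S₂, hS₂⟩ := eventually_atTop.1 hevu
    have hyineq : ∀ s ≥ S₂, x' s + l₂ * (x s - xs) ≤ C * B / l₁ + σ := fun s hs =>
      le_trans (le_abs_self _) (hS₂ s hs)
    have hyineqn : ∀ s ≥ S₂, -(x' s) + l₂ * (-(x s - xs)) ≤ C * B / l₁ + σ := by
      intro s hs
      have h1 := (abs_le.1 (hS₂ s hs)).1
      simp only [hudef] at h1 ⊢
      linarith
    have hε2 : (0:ℝ) < ε / 2 := by linarith
    have hfinal : (C * B / l₁ + σ) / l₂ + ε / 2 = (C / b) * B + ε := by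
      rw [← hmul, hσdef]
      field_simp
      ring
    filter_upwards [decay_ev l₂ (C*B/l₁+σ) S₂ (ε/2) hl₂ hε2 (fun r => x r - xs) x' hy hyineq,
      decay_ev l₂ (C*B/l₁+σ) S₂ (ε/2) hl₂ hε2 (fun r => -(x r - xs)) (fun r => -(x' r)) hyn
        hyineqn] with s h1 h2
    rw [abs_le]
    constructor <;> linarith
  -- conclusion by iteration
  rw [Metric.tendsto_atTop]
  intro δ hδ
  set ρ : ℝ := C / b with hρdef
  have h1ρ : (0:ℝ) < 1 - ρ := by linarith
  set ε : ℝ := (1 - ρ) * δ / 3 with hεdef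
  have hε : 0 < ε := by
    apply div_pos (mul_pos h1ρ hδ)
    norm_num
  set E : ℝ := ε / (1 - ρ) with hEdef
  have hE : E = δ / 3 := by
    rw [hEdef, hεdef]
    field_simp
  have hE0 : 0 ≤ E := by rw [hE]; linarith
  have ind : ∀ n : ℕ, ∀ᶠ t in atTop, |x t - xs| ≤ ρ ^ n * K + E := by
    intro n
    induction n with
    | zero =>
      filter_upwards [eventually_ge_atTop t₀] with t ht
      have h3 := stage1 t ht
      simp only [pow_zero, one_mul]
      linarith
    | succ n ih =>
      have hBn : 0 ≤ ρ ^ n * K + E := add_nonneg (mul_nonneg (pow_nonneg hρ0 n) hK0) hE0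
      have h2 := step _ hBn ih ε hε
      refine h2.mono (fun t ht => le_trans ht ?_)
      have hEfix : ρ * E + ε = E := by
        rw [hEdef]
        field_simp
        ring
      have h4 : ρ * (ρ ^ n * K + E) + ε = ρ ^ (n+1) * K + (ρ * E + ε) := by ring
      rw [h4, hEfix]
  have hlim : Tendsto (fun n : ℕ => ρ ^ n * K + E) atTop (nhds (0 * K + E)) :=
    ((tendsto_pow_atTop_nhds_zero_of_lt_one hρ0 hρ).mul_const K).add_const E
  have hEδ : 0 * K + E < δ := by rw [hE]; linarith
  obtain ⟨n, hn⟩ := (hlim.eventually (gt_mem_nhds hEδ)).exists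
  obtain ⟨N, hN⟩ := eventually_atTop.1 (ind n)
  exact ⟨N, fun t ht => by rw [Real.dist_eq]; exact lt_of_le_of_lt (hN t ht) hn⟩
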